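/- Let (G,H) be an Eulerian instance with two pairs of terminals, H = (VG, {s1t1, s2t2}). If G is connected, then (G,H) is feasible, i.e. there exist edge-disjoint paths P1 from s1 to t1 and P2 from s2 to t2 in G. -/

import Mathlib

/-!
We encode a multigraph on vertex type `V` with edge-index type `E` by a map
`G : E → V × V`: the edge with index `e` joins the (unordered) endpoints
`(G e).1` and `(G e).2`.
-/

/-- The degree of `v` in the multigraph `G`: the number of edge-ends of `G`
incident to `v` (a loop counts twice). -/
noncomputable def mdeg {V E : Type} (G : E → V × V) (v : V) : ℕ :=
  Set.ncard {p : E × Bool | (cond p.2 (G p.1).1 (G p.1).2) = v}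

/-- `mcut G U` is `d_G(U)`: the number of edges of `G` having exactly one
endpoint in `U`. -/
noncomputable def mcut {V E : Type} (G : E → V × V) (U : Set V) : ℕ :=
  Set.ncard {e : E | ((G e).1 ∈ U ∧ (G e).2 ∉ U) ∨ ((G e).2 ∈ U ∧ (G e).1 ∉ U)}

/-- Walks in the multigraph `G`; an edge may be traversed in either direction. -/
inductive MWalk {V E : Type} (G : E → V × V) : V → V → Type where
  | nil (v : V) : MWalk G v v
  | cons {u v w : V} (e : E) (he : G e = (u, v) ∨ G e = (v, u)) (tail : MWalk G v w) :
      MWalk G u w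

namespace MWalk
/-- The list of edges traversed by a walk. -/
def edges {V E : Type} {G : E → V × V} : {u v : V} → MWalk G u v → List E
  | _, _, nil _ => []
  | _, _, cons e _ p => e :: p.edges
end MWalk

/-- An instance `(G, H)` (`H` is the demand multigraph, on the same vertex set)
is feasible if the demand edges can be routed by pairwise edge-disjoint paths
of `G`: for each demand edge `i` there is a walk of `G` connecting its two
endpoints, the walks being pairwise edge-disjoint. -/
def MFeasible {V E E' : Type} (G : E → V × V) (H : E' → V × V) : Prop :=
  ∃ P : (i : E') → MWalk G (H i).1 (H i).2,
    ∀ i j : E', i ≠ j → List.Disjoint (P i).edges (P j).edges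

/-- The multigraph `G` is connected (all of its vertex set lies in one
connected component). -/
def MConnected {V E : Type} (G : E → V × V) : Prop :=
  ∀ u v : V, Nonempty (MWalk G u v)

/-- The subgraph `G[U]` induced by `U` is connected: any two vertices of `U`
are joined by a walk all of whose edges have both endpoints in `U`. -/
def MInducedConnected {V E : Type} (G : E → V × V) (U : Set V) : Prop :=
  ∀ u ∈ U, ∀ v ∈ U, ∃ p : MWalk G u v, ∀ e ∈ p.edges, (G e).1 ∈ U ∧ (G e).2 ∈ U

/-- The instance `(G, H)` is Eulerian: every vertex of `G + H` has even degree. -/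
def MEulerian {V E E' : Type} (G : E → V × V) (H : E' → V × V) : Prop :=
  ∀ v : V, Even (mdeg G v + mdeg H v)

namespace MWalk
variable {V E : Type} {G : E → V × V}

def append : {u v w : V} → MWalk G u v → MWalk G v w → MWalk G u w
  | _, _, _, nil _, q => q
  | _, _, _, cons e he p, q => cons e he (p.append q)

@[simp] lemma edges_append {u v w : V} (p : MWalk G u v) (q : MWalk G v w) :
    (p.append q).edges = p.edges ++ q.edges := by
  induction p with
  | nil => rfl
  | cons e he tail ih => simp [append, edges, ih]

def reverse : {u v : V} → MWalk G u v → MWalk G v u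
  | _, _, nil v => nil v
  | _, _, cons e he p => p.reverse.append (cons e (he.symm) (nil _))

@[simp] lemma edges_reverse {u v : V} (p : MWalk G u v) :
    p.reverse.edges = p.edges.reverse := by
  induction p with
  | nil => rfl
  | cons e he tail ih => simp [reverse, edges, ih]

def support : {u v : V} → MWalk G u v → List V
  | _, _, nil v => [v]
  | _, _, @cons _ _ _ u _ _ _ _ p => u :: p.support

@[simp] lemma start_mem_support {u v : V} (p : MWalk G u v) : u ∈ p.support := by
  cases p <;> simp [support]

@[simp] lemma end_mem_support {u v : V} (p : MWalk G u v) : v ∈ p.support := by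
  induction p with
  | nil => simp [support]
  | cons e he tail ih => simp [support, ih]

lemma endpoint_mem_support {u v : V} (p : MWalk G u v) {e : E} (he : e ∈ p.edges) :
    (G e).1 ∈ p.support ∧ (G e).2 ∈ p.support := by
  induction p with
  | nil => simp [edges] at he
  | cons f hf tail ih =>
    rw [edges, List.mem_cons] at he
    rcases he with rfl | he
    · rcases hf with hf | hf <;> simp [support, hf]
    · exact ⟨List.mem_cons_of_mem _ (ih he).1, List.mem_cons_of_mem _ (ih he).2⟩

lemma split_at_vertex {u w : V} (p : MWalk G u w) {x : V} (hx : x ∈ p.support) :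
    ∃ (p1 : MWalk G u x) (p2 : MWalk G x w), p1.edges ++ p2.edges = p.edges := by
  induction p with
  | nil v =>
    simp [support] at hx; subst hx
    exact ⟨nil _, nil _, rfl⟩
  | @cons u v w e he tail ih =>
    rw [support, List.mem_cons] at hx
    rcases hx with rfl | hx
    · exact ⟨nil x, cons e he tail, rfl⟩
    · obtain ⟨p1, p2, hp⟩ := ih hx
      exact ⟨cons e he p1, p2, by simp [edges, hp]⟩

lemma split_at_edge {u w : V} (p : MWalk G u w) {f : E} (hf : f ∈ p.edges) :
    ∃ (a b : V) (_ : G f = (a, b) ∨ G f = (b, a)) (p1 : MWalk G u a) (p2 : MWalk G b w),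
      p.edges = p1.edges ++ f :: p2.edges := by
  induction p with
  | nil => simp [edges] at hf
  | @cons u v w e he tail ih =>
    rw [edges, List.mem_cons] at hf
    rcases hf with rfl | hf
    · exact ⟨u, v, he, nil u, tail, rfl⟩
    · obtain ⟨a, b, hab, p1, p2, hp⟩ := ih hf
      exact ⟨a, b, hab, cons e he p1, p2, by simp [edges, hp]⟩

end MWalk

section MEulerDev
attribute [local instance] Classical.propDecidable

variable {V F : Type} (K : F → V × V)

/-- ends of edges of a multiset incident to x -/
noncomputable def degM (s : Multiset F) (x : V) : ℕ :=
  Multiset.countP (fun g => (K g).1 = x) s + Multiset.countP (fun g => (K g).2 = x) s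

lemma degM_add (s t : Multiset F) (x : V) :
    degM K (s + t) x = degM K s x + degM K t x := by
  simp [degM, Multiset.countP_add]; ring

lemma degM_cons (f : F) (s : Multiset F) (x : V) :
    degM K (f ::ₘ s) x
      = ((if (K f).1 = x then 1 else 0) + if (K f).2 = x then 1 else 0) + degM K s x := by
  simp [degM, Multiset.countP_cons]; ring

lemma degM_zero_of (s : Multiset F) (x : V)
    (h : ∀ g ∈ s, (K g).1 ≠ x ∧ (K g).2 ≠ x) : degM K s x = 0 := by
  simp only [degM, Nat.add_eq_zero, Multiset.countP_eq_zero]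
  exact ⟨fun g hg => (h g hg).1, fun g hg => (h g hg).2⟩

lemma degM_incident (s : Multiset F) (x : V) (h : degM K s x ≠ 0) :
    ∃ g ∈ s, (K g).1 = x ∨ (K g).2 = x := by
  by_contra hc
  push_neg at hc
  exact h (degM_zero_of K s x (by simpa [not_or] using hc))

/-- degree of x in an edge-subset S -/
noncomputable def degF (S : Finset F) (x : V) : ℕ := degM K S.val x

lemma degF_erase (S : Finset F) (f : F) (hf : f ∈ S) (x : V) :
    degF K S x
      = ((if (K f).1 = x then 1 else 0) + if (K f).2 = x then 1 else 0)
        + degF K (S.erase f) x := by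
  have h : S.val = f ::ₘ (S.erase f).val := by
    rw [Finset.erase_val]
    exact (Multiset.cons_erase (by simpa using hf)).symm
  rw [degF, h, degM_cons]; rfl

lemma degF_split (S C : Finset F) (hC : C ⊆ S) (x : V) :
    degF K S x = degF K C x + degF K (S \ C) x := by
  have h : S.val = C.val + (S \ C).val := by
    have := Finset.sdiff_val S C
    rw [this]
    exact (add_tsub_cancel_of_le (Finset.val_le_iff.2 hC)).symm
  rw [degF, h, degM_add]; rfl

lemma degF_sdiff_list (S : Finset F) (l : List F) (hl : l.Nodup) (hsub : ∀ e ∈ l, e ∈ S) (x : V) :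
    degF K S x = degM K (↑l) x + degF K (S \ l.toFinset) x := by
  have h1 : l.toFinset ⊆ S := fun e he => hsub e (List.mem_toFinset.1 he)
  have h2 : (l.toFinset : Finset F).val = (↑l : Multiset F) := by
    simp only [List.toFinset, Multiset.toFinset]
    exact Multiset.dedup_eq_self.2 (Multiset.coe_nodup.2 hl)
  rw [degF_split K S l.toFinset h1, degF, h2]

lemma handshake (C : Finset F) (T : Finset V)
    (hT : ∀ g ∈ C, (K g).1 ∈ T ∧ (K g).2 ∈ T) :
    ∑ x ∈ T, degF K C x = 2 * C.card := by
  have h1 : C.card = ∑ x ∈ T, (C.filter (fun g => (K g).1 = x)).card :=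
    Finset.card_eq_sum_card_fiberwise (fun g hg => (hT g hg).1)
  have h2 : C.card = ∑ x ∈ T, (C.filter (fun g => (K g).2 = x)).card :=
    Finset.card_eq_sum_card_fiberwise (fun g hg => (hT g hg).2)
  have : ∀ x, degF K C x = (C.filter (fun g => (K g).1 = x)).card
      + (C.filter (fun g => (K g).2 = x)).card := by
    intro x
    simp [degF, degM, Multiset.countP_eq_card_filter, Finset.filter, Finset.card]
  simp only [this, Finset.sum_add_distrib, ← h1, ← h2]
  ring


lemma ite_flip {W : Type} (c d : W) [Decidable (c = d)] [Decidable (d = c)] :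
    (if c = d then (1:ℕ) else 0) = if d = c then 1 else 0 := by
  by_cases h : c = d
  · rw [if_pos h, if_pos h.symm]
  · rw [if_neg h, if_neg (fun hh => h hh.symm)]

/-- y is reachable from x using only edges of S -/
def Reach (S : Finset F) (x y : V) : Prop :=
  ∃ q : MWalk K x y, ∀ g ∈ q.edges, g ∈ S

lemma Reach.refl (S : Finset F) (x : V) : Reach K S x x :=
  ⟨MWalk.nil x, by simp [MWalk.edges]⟩

lemma reach_endpoints {S : Finset F} {x y : V} {g : F} (hg : g ∈ S)
    (hy : (K g).1 = y ∨ (K g).2 = y) (h : Reach K S x y) :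
    Reach K S x (K g).1 ∧ Reach K S x (K g).2 := by
  obtain ⟨q, hq⟩ := h
  rcases hy with hy | hy
  · refine ⟨hy ▸ ⟨q, hq⟩, ?_⟩
    refine ⟨q.append (MWalk.cons g (Or.inl ?_) (MWalk.nil _)), ?_⟩
    · rw [← hy]
    · intro g' hg'
      simp only [MWalk.edges_append, MWalk.edges, List.mem_append, List.mem_cons] at hg'
      rcases hg' with h' | h' | h'
      · exact hq g' h'
      · exact h' ▸ hg
      · simp [MWalk.edges] at h'
  · refine ⟨?_, hy ▸ ⟨q, hq⟩⟩
    refine ⟨q.append (MWalk.cons g (Or.inr ?_) (MWalk.nil _)), ?_⟩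
    · rw [← hy]
    · intro g' hg'
      simp only [MWalk.edges_append, MWalk.edges, List.mem_append, List.mem_cons] at hg'
      rcases hg' with h' | h' | h'
      · exact hq g' h'
      · exact h' ▸ hg
      · simp [MWalk.edges] at h'

lemma euler_empty {a b : V}
    (hpar : ∀ x : V, (degF K (∅ : Finset F) x + (if x = a then 1 else 0)
      + (if x = b then 1 else 0)) % 2 = 0) : a = b := by
  have h := hpar a
  have h0 : degF K (∅ : Finset F) a = 0 := by simp [degF, degM]
  rw [h0, if_pos rfl] at h
  by_cases hab : a = b
  · exact hab
  · rw [if_neg hab] at h; omega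

lemma exists_incident_of_walk {S : Finset F} {x y : V} (q : MWalk K x y)
    (hq : ∀ g ∈ q.edges, g ∈ S) (hy : ∃ g ∈ S, (K g).1 = y ∨ (K g).2 = y) :
    ∃ f ∈ S, (K f).1 = x ∨ (K f).2 = x := by
  cases q with
  | nil => exact hy
  | cons e he tail =>
    refine ⟨e, hq e (by simp [MWalk.edges]), ?_⟩
    rcases he with h | h
    · left; rw [h]
    · right; rw [h]

lemma euler_trail :
    ∀ (n : ℕ) (S : Finset F), S.card ≤ n → ∀ a b : V,
      (∀ x : V, (degF K S x + (if x = a then 1 else 0) + (if x = b then 1 else 0)) % 2 = 0) →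
      (∀ f ∈ S, Reach K S a (K f).1) →
      ∃ p : MWalk K a b, p.edges.Nodup ∧ ∀ f : F, f ∈ p.edges ↔ f ∈ S := by
  intro n
  induction n with
  | zero =>
    intro S hS a b hpar _
    have hSe : S = ∅ := Finset.card_eq_zero.1 (Nat.le_antisymm hS (Nat.zero_le _))
    subst hSe
    have hab := euler_empty K hpar
    subst hab
    exact ⟨MWalk.nil a, by simp [MWalk.edges], fun f => by simp [MWalk.edges]⟩
  | succ m ih =>
    intro S hS a b hpar hcon
    by_cases hSe : S = ∅
    · subst hSe
      have hab := euler_empty K hpar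
      subst hab
      exact ⟨MWalk.nil a, by simp [MWalk.edges], fun f => by simp [MWalk.edges]⟩
    -- find an edge f incident to a
    obtain ⟨g0, hg0⟩ := Finset.nonempty_iff_ne_empty.2 hSe
    obtain ⟨q0, hq0⟩ := hcon g0 hg0
    obtain ⟨f, hfS, hfa⟩ := exists_incident_of_walk K q0 hq0 ⟨g0, hg0, Or.inl rfl⟩
    obtain ⟨u, hef⟩ : ∃ u, K f = (a, u) ∨ K f = (u, a) := by
      rcases hfa with h | h
      · exact ⟨(K f).2, Or.inl (by rw [← h])⟩
      · exact ⟨(K f).1, Or.inr (by rw [← h])⟩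
    set S' := S.erase f with hS'def
    have hfS' : f ∉ S' := Finset.notMem_erase f S
    have hS'sub : S' ⊆ S := Finset.erase_subset f S
    have hP2 : ∀ x : V,
        (degF K S' x + (if x = u then 1 else 0) + (if x = b then 1 else 0)) % 2 = 0 := by
      intro x
      have h := hpar x
      rw [degF_erase K S f hfS x] at h
      rw [← hS'def] at h
      have hend : (if (K f).1 = x then 1 else 0) + (if (K f).2 = x then 1 else 0)
          = (if x = a then 1 else 0) + (if x = u then 1 else 0) := by
        rcases hef with h | h <;> rw [h]
        · show (if a = x then 1 else 0) + (if u = x then 1 else 0) = _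
          rw [ite_flip a x, ite_flip u x]
        · show (if u = x then 1 else 0) + (if a = x then 1 else 0) = _
          rw [ite_flip a x, ite_flip u x]
          omega
      omega
    set C := S'.filter (fun g => Reach K S' u (K g).1) with hCdef
    set D := S' \ C with hDdef
    have hCS' : C ⊆ S' := Finset.filter_subset _ _
    have hDS' : D ⊆ S' := Finset.sdiff_subset
    have memC : ∀ {g : F}, g ∈ C ↔ g ∈ S' ∧ Reach K S' u (K g).1 := fun {g} =>
      Finset.mem_filter
    have L1 : ∀ g ∈ S', (Reach K S' u (K g).1 ∨ Reach K S' u (K g).2) → g ∈ C := by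
      intro g hg hr
      rcases hr with hr | hr
      · exact memC.2 ⟨hg, hr⟩
      · exact memC.2 ⟨hg, (reach_endpoints K hg (Or.inr rfl) hr).1⟩
    have L3 : ∀ g ∈ C, ∀ x : V, ((K g).1 = x ∨ (K g).2 = x) → Reach K S' u x := by
      intro g hg x hx
      have h1 := (memC.1 hg).2
      have h2 := reach_endpoints K (memC.1 hg).1 (Or.inl rfl) h1
      rcases hx with hx | hx
      · exact hx ▸ h2.1
      · exact hx ▸ h2.2
    have L4 : ∀ g ∈ D, ∀ x : V, ((K g).1 = x ∨ (K g).2 = x) → ¬Reach K S' u x := by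
      intro g hg x hx hr
      have hgS' : g ∈ S' := hDS' hg
      have h2 := reach_endpoints K hgS' hx hr
      have : g ∈ C := L1 g hgS' (Or.inl h2.1)
      exact (Finset.mem_sdiff.1 hg).2 this
    have L2 : ∀ {z y : V} (q : MWalk K z y), Reach K S' u z →
        (∀ e ∈ q.edges, e ∈ S') → ∀ e ∈ q.edges, e ∈ C := by
      intro z y q
      induction q with
      | nil => intro _ _ e he; simp [MWalk.edges] at he
      | @cons z v y e he tail ihq =>
        intro hz hsub e' he'
        have heS' : e ∈ S' := hsub e (by simp [MWalk.edges])
        have heC : e ∈ C := by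
          refine L1 e heS' ?_
          rcases he with h | h
          · left; rw [h]; exact hz
          · right; rw [h]; exact hz
        have hv : Reach K S' u v := by
          refine L3 e heC v ?_
          rcases he with h | h
          · right; rw [h]
          · left; rw [h]
        rw [MWalk.edges, List.mem_cons] at he'
        rcases he' with rfl | h''
        · exact heC
        · exact ihq hv (fun e2 he2 => hsub e2 (List.mem_cons_of_mem _ he2)) e' h''
    have L7 : ∀ {z y : V} (q : MWalk K z y), (∀ e ∈ q.edges, e ∈ S) →
        (Reach K D a z ∨ Reach K S' u z) → (Reach K D a y ∨ Reach K S' u y) := by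
      intro z y q
      induction q with
      | nil => intro _ hz; exact hz
      | @cons z v y e he tail ihq =>
        intro hsub hz
        have heS : e ∈ S := hsub e (by simp [MWalk.edges])
        refine ihq (fun e2 he2 => hsub e2 (List.mem_cons_of_mem _ he2)) ?_
        by_cases hef' : e = f
        · subst hef'
          have hva : v = a ∨ v = u := by
            rcases he with h1 | h1 <;> rcases hef with h2 | h2 <;>
              rw [h1] at h2 <;>
              simp only [Prod.mk.injEq] at h2
            · exact Or.inr h2.2
            · exact Or.inl h2.2
            · exact Or.inl h2.1
            · exact Or.inr h2.1
          rcases hva with rfl | rfl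
          · exact Or.inl (Reach.refl K D v)
          · exact Or.inr (Reach.refl K S' v)
        · have heS' : e ∈ S' := Finset.mem_erase.2 ⟨hef', heS⟩
          by_cases heC : e ∈ C
          · refine Or.inr (L3 e heC v ?_)
            rcases he with h | h
            · right; rw [h]
            · left; rw [h]
          · have heD : e ∈ D := Finset.mem_sdiff.2 ⟨heS', heC⟩
            rcases hz with hz | hz
            · obtain ⟨q1, hq1⟩ := hz
              left
              refine ⟨q1.append (MWalk.cons e he (MWalk.nil v)), ?_⟩
              intro g' hg'
              simp only [MWalk.edges_append, MWalk.edges, List.mem_append,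
                List.mem_cons] at hg'
              rcases hg' with h' | h' | h'
              · exact hq1 g' h'
              · exact h' ▸ heD
              · simp [MWalk.edges] at h'
            · exfalso
              refine L4 e heD z ?_ hz
              rcases he with h | h
              · left; rw [h]
              · right; rw [h]
    -- case analysis on whether b is incident to D
    by_cases hbD : ∃ g ∈ D, (K g).1 = b ∨ (K g).2 = b
    · -- contradiction via handshake on C
      exfalso
      have hbr : ¬Reach K S' u b := by
        obtain ⟨g, hg, hgb⟩ := hbD
        exact L4 g hg b hgb
      have hbu : b ≠ u := fun h => hbr (h ▸ Reach.refl K S' u)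
      set T := C.image (fun g => (K g).1) ∪ C.image (fun g => (K g).2) with hTdef
      have hT : ∀ g ∈ C, (K g).1 ∈ T ∧ (K g).2 ∈ T := by
        intro g hg
        constructor
        · exact Finset.mem_union_left _ (Finset.mem_image_of_mem _ hg)
        · exact Finset.mem_union_right _ (Finset.mem_image_of_mem _ hg)
      have hsum := handshake K C T hT
      have hsplit : ∀ x : V, degF K S' x = degF K C x + degF K D x := by
        intro x
        have h := degF_split K S' C hCS' x
        rw [← hDdef] at h
        exact h
      have hDu : degF K D u = 0 := by
        refine degM_zero_of K D.val u ?_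
        intro g hg
        constructor
        · intro h; exact L4 g hg u (Or.inl h) (Reach.refl K S' u)
        · intro h; exact L4 g hg u (Or.inr h) (Reach.refl K S' u)
      have huodd : degF K C u % 2 = 1 := by
        have h := hP2 u
        rw [if_pos rfl, if_neg (Ne.symm hbu)] at h
        have := hsplit u
        omega
      have humem : u ∈ T := by
        have hne : degF K C u ≠ 0 := by omega
        obtain ⟨g, hg, hgu⟩ := degM_incident K C.val u hne
        rcases hgu with h | h
        · exact Finset.mem_union_left _ (Finset.mem_image.2 ⟨g, hg, h⟩)
        · exact Finset.mem_union_right _ (Finset.mem_image.2 ⟨g, hg, h⟩)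
      have hxeven : ∀ x ∈ T.erase u, degF K C x % 2 = 0 := by
        intro x hx
        have hxu : x ≠ u := (Finset.mem_erase.1 hx).1
        have hxT : x ∈ T := (Finset.mem_erase.1 hx).2
        have hinc : ∃ g ∈ C, (K g).1 = x ∨ (K g).2 = x := by
          rcases Finset.mem_union.1 hxT with h | h
          · obtain ⟨g, hg, hgx⟩ := Finset.mem_image.1 h
            exact ⟨g, hg, Or.inl hgx⟩
          · obtain ⟨g, hg, hgx⟩ := Finset.mem_image.1 h
            exact ⟨g, hg, Or.inr hgx⟩
        obtain ⟨g, hg, hgx⟩ := hinc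
        have hrx : Reach K S' u x := L3 g hg x hgx
        have hxb : x ≠ b := fun h => hbr (h ▸ hrx)
        have hDx : degF K D x = 0 := by
          refine degM_zero_of K D.val x ?_
          intro g' hg'
          constructor
          · intro h; exact L4 g' hg' x (Or.inl h) hrx
          · intro h; exact L4 g' hg' x (Or.inr h) hrx
        have h := hP2 x
        rw [if_neg hxu, if_neg hxb] at h
        have := hsplit x
        omega
      rw [← Finset.add_sum_erase T _ humem] at hsum
      have hsume : (∑ x ∈ T.erase u, degF K C x) % 2 = 0 := by
        rw [Finset.sum_nat_mod]
        rw [Finset.sum_congr rfl hxeven]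
        simp
      omega
    · -- main construction
      have hDeven : ∀ x : V, degF K D x % 2 = 0 := by
        intro x
        by_cases hx : ∃ g ∈ D, (K g).1 = x ∨ (K g).2 = x
        · obtain ⟨g, hg, hgx⟩ := hx
          have hxr : ¬Reach K S' u x := L4 g hg x hgx
          have hxu : x ≠ u := fun h => hxr (h ▸ Reach.refl K S' u)
          have hxb : x ≠ b := fun h => hbD ⟨g, hg, h ▸ hgx⟩
          have hCx : degF K C x = 0 := by
            refine degM_zero_of K C.val x ?_
            intro g' hg'
            constructor
            · intro h; exact hxr (L3 g' hg' x (Or.inl h))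
            · intro h; exact hxr (L3 g' hg' x (Or.inr h))
          have h := hP2 x
          rw [if_neg hxu, if_neg hxb] at h
          have h2 := degF_split K S' C hCS' x
          rw [← hDdef] at h2
          omega
        · push_neg at hx
          have : degF K D x = 0 := by
            refine degM_zero_of K D.val x ?_
            intro g hg
            exact ⟨(hx g hg).1, (hx g hg).2⟩
          omega
      have hCpar : ∀ x : V,
          (degF K C x + (if x = u then 1 else 0) + (if x = b then 1 else 0)) % 2 = 0 := by
        intro x
        have h := hP2 x
        have h2 := degF_split K S' C hCS' x
        rw [← hDdef] at h2
        have h3 := hDeven x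
        omega
      have hDpar : ∀ x : V,
          (degF K D x + (if x = a then 1 else 0) + (if x = a then 1 else 0)) % 2 = 0 := by
        intro x
        have h := hDeven x
        by_cases hxa : x = a
        · subst hxa; rw [if_pos rfl]; omega
        · rw [if_neg hxa]; omega
      have hconC : ∀ g ∈ C, Reach K C u (K g).1 := by
        intro g hg
        obtain ⟨q, hq⟩ := (memC.1 hg).2
        exact ⟨q, L2 q (Reach.refl K S' u) hq⟩
      have hconD : ∀ g ∈ D, Reach K D a (K g).1 := by
        intro g hg
        obtain ⟨q, hq⟩ := hcon g (hS'sub (hDS' hg))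
        have h := L7 q hq (Or.inl (Reach.refl K D a))
        rcases h with h | h
        · exact h
        · exact absurd (L1 g (hDS' hg) (Or.inl h)) (Finset.mem_sdiff.1 hg).2
      have hcS : 1 ≤ S.card := Finset.card_pos.2 (Finset.nonempty_iff_ne_empty.2 hSe)
      have hcS' : S'.card ≤ m := by
        have h := Finset.card_erase_of_mem hfS
        rw [← hS'def] at h
        omega
      obtain ⟨pC, hpCnd, hpCmem⟩ :=
        ih C (le_trans (Finset.card_le_card hCS') hcS') u b hCpar hconC
      obtain ⟨pD, hpDnd, hpDmem⟩ :=
        ih D (le_trans (Finset.card_le_card hDS') hcS') a a hDpar hconD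
      have hfC : f ∉ C := fun h => hfS' (hCS' h)
      have hfD : f ∉ D := fun h => hfS' (hDS' h)
      refine ⟨pD.append (MWalk.cons f hef pC), ?_, ?_⟩
      · rw [MWalk.edges_append, MWalk.edges]
        rw [List.nodup_append]
        refine ⟨hpDnd, ?_, ?_⟩
        · rw [List.nodup_cons]
          exact ⟨fun h => hfC ((hpCmem f).1 h), hpCnd⟩
        · intro e heD' e' heC' hee
          subst hee
          have h1 : e ∈ D := (hpDmem e).1 heD'
          rw [List.mem_cons] at heC'
          rcases heC' with rfl | h2
          · exact hfD h1
          · exact (Finset.mem_sdiff.1 h1).2 ((hpCmem e).1 h2)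
      · intro g
        rw [MWalk.edges_append, MWalk.edges]
        simp only [List.mem_append, List.mem_cons]
        constructor
        · rintro (h | rfl | h)
          · exact hS'sub (hDS' ((hpDmem g).1 h))
          · exact hfS
          · exact hS'sub (hCS' ((hpCmem g).1 h))
        · intro hg
          by_cases hgf : g = f
          · exact Or.inr (Or.inl hgf)
          · have hgS' : g ∈ S' := Finset.mem_erase.2 ⟨hgf, hg⟩
            by_cases hgC : g ∈ C
            · exact Or.inr (Or.inr ((hpCmem g).2 hgC))
            · exact Or.inl ((hpDmem g).2 (Finset.mem_sdiff.2 ⟨hgS', hgC⟩))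

end MEulerDev

lemma countP_univ_eq_sum {F : Type} [Fintype F] (p : F → Prop) [DecidablePred p] :
    Multiset.countP p (Finset.univ.val : Multiset F) = ∑ e : F, if p e then 1 else 0 := by
  rw [Multiset.countP_eq_card_filter]
  rw [show Multiset.card (Multiset.filter p Finset.univ.val)
      = (Finset.filter p Finset.univ).card from rfl]
  exact Finset.card_filter _ _

lemma mdeg_eq_degF {V F : Type} [Fintype F] (K : F → V × V) (v : V) :
    mdeg K v = degF K Finset.univ v := by
  classical
  rw [mdeg, Set.ncard_eq_toFinset_card', Set.toFinset_setOf, Finset.card_filter,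
    Fintype.sum_prod_type]
  simp only [Fintype.sum_bool, cond_true, cond_false]
  simp only [degF, degM]
  rw [countP_univ_eq_sum, countP_univ_eq_sum, ← Finset.sum_add_distrib]

def liftSum {V E E' : Type} (G : E → V × V) (R : E' → V × V) :
    ∀ {x y : V}, MWalk G x y → MWalk (Sum.elim G R) x y
  | _, _, .nil v => .nil v
  | _, _, .cons e he tail => .cons (Sum.inl e) he (liftSum G R tail)

lemma projSum {V E E' : Type} (G : E → V × V) (R : E' → V × V) :
    ∀ {x y : V} (q : MWalk (Sum.elim G R) x y), (∀ e' : E', Sum.inr e' ∉ q.edges) →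
      ∃ q' : MWalk G x y, q.edges = q'.edges.map Sum.inl := by
  intro x y q
  induction q with
  | nil => exact fun _ => ⟨.nil _, rfl⟩
  | cons g hg tail ih =>
    intro h
    cases g with
    | inl e =>
      obtain ⟨q', hq'⟩ := ih (fun e' he' => h e' (List.mem_cons_of_mem _ he'))
      exact ⟨.cons e hg q', by show Sum.inl e :: tail.edges = (e :: q'.edges).map Sum.inl; rw [hq', List.map_cons]⟩
    | inr e' =>
      exact absurd (by simp [MWalk.edges] : Sum.inr e' ∈ (MWalk.cons (Sum.inr e') hg tail).edges)
        (h e')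

lemma cross_vertex {V E : Type} {G : E → V × V} {x1 y1 x2 y2 : V}
    (Q1 : MWalk G x1 y1) (Q2 : MWalk G x2 y2)
    (hcov : ∀ e : E, e ∈ Q1.edges ∨ e ∈ Q2.edges) :
    ∀ {z y : V} (_ : MWalk G z y), z ∈ Q1.support → y ∈ Q2.support →
      ∃ x, x ∈ Q1.support ∧ x ∈ Q2.support := by
  intro z y W
  induction W with
  | nil v => exact fun hz hy => ⟨v, hz, hy⟩
  | @cons z v y e he tail ih =>
    intro hz hy
    rcases hcov e with h | h
    · refine ih ?_ hy
      have hend := MWalk.endpoint_mem_support Q1 h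
      rcases he with hh | hh
      · rw [hh] at hend; exact hend.2
      · rw [hh] at hend; exact hend.1
    · have hend := MWalk.endpoint_mem_support Q2 h
      rcases he with hh | hh
      · rw [hh] at hend; exact ⟨z, hz, hend.1⟩
      · rw [hh] at hend; exact ⟨z, hz, hend.2⟩

/-- An Eulerian instance `(G, H)` with two pairs of terminals,
`H = (VG, {s₁t₁, s₂t₂})`, and `G` connected is feasible: there are
edge-disjoint paths `P₁ : s₁–t₁` and `P₂ : s₂–t₂` in `G`. -/
theorem statement5 {V E : Type} [Fintype E]
    (G : E → V × V) (s1 t1 s2 t2 : V)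
    (H : Fin 2 → V × V) (hH : H = ![(s1, t1), (s2, t2)])
    (euler : MEulerian G H)
    (hconn : MConnected G) :
    ∃ (P1 : MWalk G s1 t1) (P2 : MWalk G s2 t2), P1.edges.Disjoint P2.edges := by
  classical
  subst hH
  have hKdeg : ∀ x : V, degF (Sum.elim G (fun _ : Unit => (s2, t2))) Finset.univ x
      = degF G Finset.univ x + ((if s2 = x then 1 else 0) + (if t2 = x then 1 else 0)) := by
    intro x
    simp only [degF, degM]
    rw [countP_univ_eq_sum, countP_univ_eq_sum,
      countP_univ_eq_sum, countP_univ_eq_sum, Fintype.sum_sum_type, Fintype.sum_sum_type]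
    simp only [Sum.elim_inl, Sum.elim_inr, Finset.univ_unique, Finset.sum_singleton]
    rw [add_add_add_comm]
    congr!
  have hHdeg : ∀ x : V, mdeg ![(s1, t1), (s2, t2)] x
      = ((if s1 = x then 1 else 0) + (if t1 = x then 1 else 0))
        + ((if s2 = x then 1 else 0) + (if t2 = x then 1 else 0)) := by
    intro x
    rw [mdeg_eq_degF]
    simp only [degF, degM]
    rw [countP_univ_eq_sum, countP_univ_eq_sum, Fin.sum_univ_two, Fin.sum_univ_two]
    simp only [Matrix.cons_val_zero, Matrix.cons_val_one, Matrix.head_cons]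
    by_cases h1 : s1 = x <;> by_cases h2 : t1 = x <;> by_cases h3 : s2 = x <;>
      by_cases h4 : t2 = x <;> simp [h1, h2, h3, h4] <;> omega
  have hpar : ∀ x : V, (degF (Sum.elim G (fun _ : Unit => (s2, t2))) Finset.univ x + (if x = s1 then 1 else 0)
      + (if x = t1 then 1 else 0)) % 2 = 0 := by
    intro x
    have he := euler x
    rw [Nat.even_iff] at he
    rw [mdeg_eq_degF, hHdeg x] at he
    rw [hKdeg x, ite_flip x s1, ite_flip x t1]
    omega
  have hconK : ∀ f ∈ (Finset.univ : Finset (E ⊕ Unit)), Reach (Sum.elim G (fun _ : Unit => (s2, t2))) Finset.univ s1 ((Sum.elim G (fun _ : Unit => (s2, t2))) f).1 := by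
    intro f _
    obtain ⟨w⟩ := hconn s1 ((Sum.elim G (fun _ : Unit => (s2, t2))) f).1
    exact ⟨liftSum G _ w, fun g _ => Finset.mem_univ g⟩
  obtain ⟨p, hnd, hmem⟩ :=
    euler_trail (Sum.elim G (fun _ : Unit => (s2, t2))) Finset.univ.card Finset.univ le_rfl s1 t1 hpar hconK
  have hinr : Sum.inr () ∈ p.edges := (hmem _).2 (Finset.mem_univ _)
  obtain ⟨a', b', hab, p1, p2, hsplit⟩ := MWalk.split_at_edge p hinr
  rw [hsplit] at hnd
  rw [List.nodup_append] at hnd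
  obtain ⟨nd1, nd2', disj⟩ := hnd
  have hnotin1 : ∀ e' : Unit, Sum.inr e' ∉ p1.edges := by
    rintro ⟨⟩ h
    exact disj _ h _ List.mem_cons_self rfl
  have hnotin2 : ∀ e' : Unit, Sum.inr e' ∉ p2.edges := by
    rintro ⟨⟩ h
    exact (List.nodup_cons.1 nd2').1 h
  obtain ⟨Q1, hQ1⟩ := projSum G _ p1 hnotin1
  obtain ⟨Q2, hQ2⟩ := projSum G _ p2 hnotin2
  have hnd1 : Q1.edges.Nodup := by
    rw [hQ1] at nd1; exact nd1.of_map
  have hnd2 : Q2.edges.Nodup := by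
    have := (List.nodup_cons.1 nd2').2
    rw [hQ2] at this; exact this.of_map
  have hdisjQ : ∀ e : E, e ∈ Q1.edges → e ∈ Q2.edges → False := by
    intro e h1 h2
    have m1 : Sum.inl e ∈ p1.edges := by rw [hQ1]; exact List.mem_map_of_mem h1
    have m2 : Sum.inl e ∈ Sum.inr () :: p2.edges :=
      List.mem_cons_of_mem _ (by rw [hQ2]; exact List.mem_map_of_mem h2)
    exact disj _ m1 _ m2 rfl
  have hcov : ∀ e : E, e ∈ Q1.edges ∨ e ∈ Q2.edges := by
    intro e
    have h : Sum.inl e ∈ p.edges := (hmem _).2 (Finset.mem_univ _)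
    rw [hsplit, List.mem_append, List.mem_cons] at h
    rcases h with h | h | h
    · rw [hQ1] at h
      obtain ⟨e2, he2, hee⟩ := List.mem_map.1 h
      exact Or.inl (Sum.inl.inj hee ▸ he2)
    · exact absurd h (by simp)
    · rw [hQ2] at h
      obtain ⟨e2, he2, hee⟩ := List.mem_map.1 h
      exact Or.inr (Sum.inl.inj hee ▸ he2)
  have hab' : (s2, t2) = (a', b') ∨ (s2, t2) = (b', a') := hab
  obtain ⟨W⟩ := hconn s1 b'
  obtain ⟨x, hx1, hx2⟩ :=
    cross_vertex Q1 Q2 hcov W (MWalk.start_mem_support Q1) (MWalk.start_mem_support Q2)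
  obtain ⟨A1, A2, hA⟩ := Q1.split_at_vertex hx1
  obtain ⟨B1, B2, hB⟩ := Q2.split_at_vertex hx2
  have hndA : (A1.edges ++ A2.edges).Nodup := by rw [hA]; exact hnd1
  have hndB : (B1.edges ++ B2.edges).Nodup := by rw [hB]; exact hnd2
  have hdA := (List.nodup_append.1 hndA).2.2
  have hdB := (List.nodup_append.1 hndB).2.2
  have hmA1 : ∀ e ∈ A1.edges, e ∈ Q1.edges := fun e h =>
    hA ▸ List.mem_append_left _ h
  have hmA2 : ∀ e ∈ A2.edges, e ∈ Q1.edges := fun e h =>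
    hA ▸ List.mem_append_right _ h
  have hmB1 : ∀ e ∈ B1.edges, e ∈ Q2.edges := fun e h =>
    hB ▸ List.mem_append_left _ h
  have hmB2 : ∀ e ∈ B2.edges, e ∈ Q2.edges := fun e h =>
    hB ▸ List.mem_append_right _ h
  rcases hab' with hab2 | hab2
  · -- a' = s2, b' = t2 : Q1 : s1 → s2, Q2 : t2 → t1
    obtain ⟨hA', hB'⟩ := Prod.ext_iff.1 hab2
    subst hA'; subst hB'
    refine ⟨A1.append B2, A2.reverse.append B1.reverse, ?_⟩
    intro e he1 he2
    rw [MWalk.edges_append, List.mem_append] at he1 he2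
    rw [MWalk.edges_reverse, MWalk.edges_reverse, List.mem_reverse, List.mem_reverse] at he2
    rcases he1 with h1 | h1 <;> rcases he2 with h2 | h2
    · exact hdA _ h1 _ h2 rfl
    · exact hdisjQ e (hmA1 e h1) (hmB1 e h2)
    · exact hdisjQ e (hmA2 e h2) (hmB2 e h1)
    · exact hdB _ h2 _ h1 rfl
  · -- a' = t2, b' = s2 : Q1 : s1 → t2, Q2 : s2 → t1
    obtain ⟨hA', hB'⟩ := Prod.ext_iff.1 hab2
    subst hA'; subst hB'
    refine ⟨A1.append B2, B1.append A2, ?_⟩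
    intro e he1 he2
    rw [MWalk.edges_append, List.mem_append] at he1 he2
    rcases he1 with h1 | h1 <;> rcases he2 with h2 | h2
    · exact hdisjQ e (hmA1 e h1) (hmB1 e h2)
    · exact hdA _ h1 _ h2 rfl
    · exact hdB _ h2 _ h1 rfl
    · exact hdisjQ e (hmA2 e h2) (hmB2 e h1)
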